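/- arXiv:2312.14863 — 2 statements merged into one kernel-verified Lean document; each statement's English description precedes it below -/
import Mathlib

section
/- If A is a generalized t-edge distance-balanced graph in which m_0(f) takes a constant value on all edges, then the edge-Szeged index of A equals t·|E(A)|·(|E(A)| − m_0 − 1)²/(t+1)², where m_0 is that constant value. -/
open SimpleGraph Finset

/-- Distance from a vertex to an edge: the minimum distance to its endpoints. -/
noncomputable def edgeDist {V : Type*} (G : SimpleGraph V) (v : V) (e : Sym2 V) : ℕ :=
  Sym2.lift ⟨fun x y => min (G.dist v x) (G.dist v y), fun _ _ => min_comm _ _⟩ e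

/-- Number of edges strictly closer to `α` than to `β`. -/
noncomputable def mCount {V : Type*} (G : SimpleGraph V) (α β : V) : ℕ :=
  {e ∈ G.edgeSet | edgeDist G α e < edgeDist G β e}.ncard

/-- Number of vertices strictly closer to `α` than to `β`. -/
noncomputable def nCount {V : Type*} (G : SimpleGraph V) (α β : V) : ℕ :=
  {w : V | G.dist w α < G.dist w β}.ncard

/-- Number of edges other than `αβ` itself equidistant from `α` and `β`. -/
noncomputable def m0Count {V : Type*} (G : SimpleGraph V) (α β : V) : ℕ :=
  {e ∈ G.edgeSet | e ≠ s(α, β) ∧ edgeDist G α e = edgeDist G β e}.ncard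

/-- The distance-partition class `D'^i_j(αβ)`: edges at distance `i` from `α`
and `j` from `β`. -/
def Dset {V : Type*} (G : SimpleGraph V) (α β : V) (i j : ℕ) : Set (Sym2 V) :=
  {e ∈ G.edgeSet | edgeDist G α e = i ∧ edgeDist G β e = j}

/-- Generalized t-edge distance-balanced graph. -/
def GtEDB {V : Type*} (G : SimpleGraph V) (t : ℕ) : Prop :=
  ∀ α β : V, G.Adj α β →
    mCount G α β = t * mCount G β α ∨ mCount G β α = t * mCount G α β

/-- The lexicographic product of two simple graphs. -/
def lexProd {V W : Type*} (A : SimpleGraph V) (B : SimpleGraph W) :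
    SimpleGraph (V × W) where
  Adj p q := A.Adj p.1 q.1 ∨ (p.1 = q.1 ∧ B.Adj p.2 q.2)
  symm := by
    constructor
    rintro p q (h | ⟨h1, h2⟩)
    · exact Or.inl h.symm
    · exact Or.inr ⟨h1.symm, h2.symm⟩
  loopless := by
    constructor
    rintro p (h | ⟨_, h⟩)
    · exact A.irrefl h
    · exact B.irrefl h
/-- for a Gt-EDB graph with constant `m₀`, the edge-Szeged index
satisfies `(t+1)² · Sz_e(A) = t · |E| · (|E| - m₀ - 1)²`. -/
theorem stmt6 {V : Type*} [Fintype V] [DecidableEq V] (G : SimpleGraph V)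
    [DecidableRel G.Adj] (t m₀ : ℕ) (hconn : G.Connected)
    (htri : ∀ α β : V, G.Adj α β →
      mCount G α β + mCount G β α + m0Count G α β = G.edgeSet.ncard - 1)
    (hGt : GtEDB G t)
    (hm0 : ∀ α β : V, G.Adj α β → m0Count G α β = m₀) :
    (t + 1) ^ 2 * (∑ e ∈ G.edgeFinset,
        Sym2.lift ⟨fun x y => mCount G x y * mCount G y x, fun x y => mul_comm _ _⟩ e)
      = t * G.edgeSet.ncard * (G.edgeSet.ncard - m₀ - 1) ^ 2 := by
  classical
  set N := G.edgeSet.ncard with hN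
  have hcard : G.edgeFinset.card = N :=
    (Set.ncard_eq_toFinset_card' _).symm
  rw [Finset.mul_sum]
  have key : ∀ e ∈ G.edgeFinset,
      (t + 1) ^ 2 * Sym2.lift ⟨fun x y => mCount G x y * mCount G y x,
        fun x y => mul_comm _ _⟩ e = t * (N - m₀ - 1) ^ 2 := by
    intro e he
    induction e using Sym2.inductionOn with
    | hf x y =>
      have hadj : G.Adj x y := by simpa using he
      have h1 := htri x y hadj
      have h2 := hm0 x y hadj
      have hNpos : 1 ≤ N := by
        have := (Set.ncard_pos (Set.toFinite G.edgeSet)).mpr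
          ⟨s(x, y), (SimpleGraph.mem_edgeSet G).mpr hadj⟩
        omega
      have hsum : mCount G x y + mCount G y x = N - m₀ - 1 := by omega
      simp only [Sym2.lift_mk]
      rcases hGt x y hadj with h | h
      · rw [h] at hsum ⊢; rw [← hsum]; ring
      · rw [h] at hsum ⊢; rw [← hsum]; ring
  rw [Finset.sum_congr rfl key, Finset.sum_const, smul_eq_mul, hcard]
  ring
end

section
/- For the Cartesian product A□B and an edge ((a₁,b),(a₂,b)) arising from an edge a₁a₂ of A, the number of edges of A□B strictly closer to (a₁,b) than to (a₂,b) equals m_{a₁}(a₁a₂)·|V(B)| + n_{a₁}(a₁a₂)·|E(B)|. -/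
open SimpleGraph Finset

section Aux
variable {V W : Type*} {A : SimpleGraph V} {B : SimpleGraph W}

theorem proj_len {x y : V × W} : ∀ (w : (A □ B).Walk x y),
    ∃ w₁ : A.Walk x.1 y.1, ∃ w₂ : B.Walk x.2 y.2, w₁.length + w₂.length = w.length
  | .nil => ⟨.nil, .nil, rfl⟩
  | .cons h p => by
      obtain ⟨w₁, w₂, hl⟩ := proj_len p
      rcases h with ⟨hG, he⟩ | ⟨hH, he⟩
      · exact ⟨.cons hG w₁, w₂.copy he.symm rfl, by
          show _ = p.length + 1; simp only [SimpleGraph.Walk.length_cons, SimpleGraph.Walk.length_copy]; omega⟩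
      · exact ⟨w₁.copy he.symm rfl, .cons hH w₂, by
          show _ = p.length + 1; simp only [SimpleGraph.Walk.length_cons, SimpleGraph.Walk.length_copy]; omega⟩

theorem boxProd_dist (hA : A.Connected) (hB : B.Connected) (x y : V × W) :
    (A □ B).dist x y = A.dist x.1 y.1 + B.dist x.2 y.2 := by
  apply le_antisymm
  · obtain ⟨wA, hwA⟩ := hA.exists_walk_length_eq_dist x.1 y.1
    obtain ⟨wB, hwB⟩ := hB.exists_walk_length_eq_dist x.2 y.2
    calc (A □ B).dist x y
        ≤ ((((wA.boxProdLeft B x.2).append (wB.boxProdRight A y.1)).copy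
            (by simp) (by simp))).length := SimpleGraph.dist_le _
      _ = wA.length + wB.length := by
          simp only [SimpleGraph.Walk.length_copy, SimpleGraph.Walk.length_append]
          exact congrArg₂ (· + ·) (SimpleGraph.Walk.length_map _ wA)
            (SimpleGraph.Walk.length_map _ wB)
      _ = _ := by rw [hwA, hwB]
  · obtain ⟨w, hw⟩ := (hA.boxProd hB).exists_walk_length_eq_dist x y
    obtain ⟨w₁, w₂, hl⟩ := proj_len w
    calc A.dist x.1 y.1 + B.dist x.2 y.2 ≤ w₁.length + w₂.length :=
          Nat.add_le_add (SimpleGraph.dist_le _) (SimpleGraph.dist_le _)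
      _ = w.length := hl
      _ = _ := hw

@[simp] theorem edgeDist_mk (G : SimpleGraph V) (v x y : V) :
    edgeDist G v s(x, y) = min (G.dist v x) (G.dist v y) := rfl

theorem edgeDist_boxProd_left (hA : A.Connected) (hB : B.Connected)
    (a : V) (c : W) (x y : V) (w : W) :
    edgeDist (A □ B) (a, c) s((x, w), (y, w)) = edgeDist A a s(x, y) + B.dist c w := by
  simp only [edgeDist_mk, boxProd_dist hA hB]
  omega

theorem edgeDist_boxProd_right (hA : A.Connected) (hB : B.Connected)
    (a : V) (c : W) (x : V) (u v : W) :
    edgeDist (A □ B) (a, c) s((x, u), (x, v))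
      = A.dist a x + min (B.dist c u) (B.dist c v) := by
  simp only [edgeDist_mk, boxProd_dist hA hB]
  omega

theorem ncard_prod' {X Y : Type*} (s : Set X) (t : Set Y) :
    (s ×ˢ t).ncard = s.ncard * t.ncard := by
  rw [← Nat.card_coe_set_eq, ← Nat.card_coe_set_eq, ← Nat.card_coe_set_eq,
    Nat.card_congr (Equiv.Set.prod s t), Nat.card_prod]

end Aux

/-- for an `A`-edge of the Cartesian product,
`m_{(a₁,b)} = m_{a₁}·|V(B)| + n_{a₁}·|E(B)|`. -/
theorem stmt8 {V W : Type*} [Fintype V] [Fintype W]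
    (A : SimpleGraph V) (B : SimpleGraph W)
    (hA : A.Connected) (hB : B.Connected)
    (a₁ a₂ : V) (h : A.Adj a₁ a₂) (b : W) :
    mCount (A.boxProd B) (a₁, b) (a₂, b)
      = mCount A a₁ a₂ * Fintype.card W + nCount A a₁ a₂ * B.edgeSet.ncard := by
  classical
  set G := A.boxProd B with hGdef
  set φ : Sym2 V × W → Sym2 (V × W) := fun p => Sym2.map (fun x => (x, p.2)) p.1 with hφdef
  set ψ : V × Sym2 W → Sym2 (V × W) := fun p => Sym2.map (fun u => (p.1, u)) p.2 with hψdef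
  set MA : Set (Sym2 V) := {e ∈ A.edgeSet | edgeDist A a₁ e < edgeDist A a₂ e} with hMAdef
  set NA : Set V := {w | A.dist w a₁ < A.dist w a₂} with hNAdef
  have hset : {e ∈ G.edgeSet | edgeDist G (a₁, b) e < edgeDist G (a₂, b) e}
      = φ '' (MA ×ˢ Set.univ) ∪ ψ '' (NA ×ˢ B.edgeSet) := by
    apply Set.Subset.antisymm
    · intro e he
      obtain ⟨⟨⟨x, u⟩, ⟨y, v⟩⟩, rfl⟩ := Quot.exists_rep e
      obtain ⟨hadj, hlt⟩ := he
      rw [SimpleGraph.mem_edgeSet, boxProd_adj] at hadj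
      rcases hadj with ⟨hAxy, huv⟩ | ⟨hBuv, hxy⟩
      · subst huv
        left
        refine ⟨(s(x, y), u), ⟨?_, Set.mem_univ _⟩, by simp [hφdef, Sym2.map_pair_eq]⟩
        refine ⟨(SimpleGraph.mem_edgeSet _).mpr hAxy, ?_⟩
        rw [hGdef, edgeDist_boxProd_left hA hB a₁ b x y u,
          edgeDist_boxProd_left hA hB a₂ b x y u] at hlt
        exact Nat.lt_of_add_lt_add_right hlt
      · subst hxy
        right
        refine ⟨(x, s(u, v)), ⟨?_, (SimpleGraph.mem_edgeSet _).mpr hBuv⟩,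
          by simp [hψdef, Sym2.map_pair_eq]⟩
        rw [hGdef, edgeDist_boxProd_right hA hB a₁ b x u v,
          edgeDist_boxProd_right hA hB a₂ b x u v] at hlt
        have h1 : A.dist a₁ x < A.dist a₂ x := Nat.lt_of_add_lt_add_right hlt
        simp only [hNAdef, Set.mem_setOf_eq]
        rwa [SimpleGraph.dist_comm (u := x) (v := a₁),
          SimpleGraph.dist_comm (u := x) (v := a₂)]
    · rintro e (⟨⟨e', w⟩, ⟨⟨hadj, hlt⟩, -⟩, rfl⟩ | ⟨⟨z, e'⟩, ⟨hz, hadj⟩, rfl⟩)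
      · obtain ⟨⟨x, y⟩, rfl⟩ := Quot.exists_rep e'
        rw [SimpleGraph.mem_edgeSet] at hadj
        simp only [hφdef, Sym2.map_pair_eq]
        refine ⟨(SimpleGraph.mem_edgeSet _).mpr (by exact Or.inl ⟨hadj, rfl⟩), ?_⟩
        rw [hGdef, edgeDist_boxProd_left hA hB a₁ b x y w,
          edgeDist_boxProd_left hA hB a₂ b x y w]
        exact Nat.add_lt_add_right hlt _
      · obtain ⟨⟨u, v⟩, rfl⟩ := Quot.exists_rep e'
        rw [SimpleGraph.mem_edgeSet] at hadj
        simp only [hψdef, Sym2.map_pair_eq]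
        refine ⟨(SimpleGraph.mem_edgeSet _).mpr (by exact Or.inr ⟨hadj, rfl⟩), ?_⟩
        rw [hGdef, edgeDist_boxProd_right hA hB a₁ b z u v,
          edgeDist_boxProd_right hA hB a₂ b z u v]
        have h1 : A.dist a₁ z < A.dist a₂ z := by
          have := hz
          simp only [hNAdef, Set.mem_setOf_eq] at this
          rwa [SimpleGraph.dist_comm (u := z) (v := a₁),
            SimpleGraph.dist_comm (u := z) (v := a₂)] at this
        exact Nat.add_lt_add_right h1 _
  have hφinj : Function.Injective φ := by
    rintro ⟨e₁, w₁⟩ ⟨e₂, w₂⟩ hh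
    obtain ⟨⟨x, y⟩, rfl⟩ := Quot.exists_rep e₁
    obtain ⟨⟨x', y'⟩, rfl⟩ := Quot.exists_rep e₂
    simp only [hφdef, Sym2.map_pair_eq, Sym2.eq_iff, Prod.mk.injEq] at hh ⊢
    constructor
    · tauto
    · tauto
  have hψinj : Function.Injective ψ := by
    rintro ⟨z₁, e₁⟩ ⟨z₂, e₂⟩ hh
    obtain ⟨⟨u, v⟩, rfl⟩ := Quot.exists_rep e₁
    obtain ⟨⟨u', v'⟩, rfl⟩ := Quot.exists_rep e₂
    simp only [hψdef, Sym2.map_pair_eq, Sym2.eq_iff, Prod.mk.injEq] at hh ⊢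
    constructor
    · tauto
    · tauto
  have hdisj : Disjoint (φ '' (MA ×ˢ Set.univ)) (ψ '' (NA ×ˢ B.edgeSet)) := by
    rw [Set.disjoint_left]
    rintro e ⟨⟨e₁, w⟩, ⟨⟨hadj₁, -⟩, -⟩, rfl⟩ ⟨⟨z, e₂⟩, ⟨-, hadj₂⟩, hψe⟩
    obtain ⟨⟨x, y⟩, rfl⟩ := Quot.exists_rep e₁
    obtain ⟨⟨u, v⟩, rfl⟩ := Quot.exists_rep e₂
    rw [SimpleGraph.mem_edgeSet] at hadj₁ hadj₂
    simp only [hφdef, hψdef, Sym2.map_pair_eq, Sym2.eq_iff, Prod.mk.injEq] at hψe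
    apply A.ne_of_adj hadj₁
    rcases hψe with ⟨⟨h1, -⟩, ⟨h2, -⟩⟩ | ⟨⟨h1, -⟩, ⟨h2, -⟩⟩
    · rw [← h1, ← h2]
    · rw [← h1, ← h2]
  have : mCount G (a₁, b) (a₂, b)
      = (φ '' (MA ×ˢ Set.univ)).ncard + (ψ '' (NA ×ˢ B.edgeSet)).ncard := by
    rw [mCount, hset, Set.ncard_union_eq hdisj]
  rw [this, Set.ncard_image_of_injective _ hφinj, Set.ncard_image_of_injective _ hψinj,
    ncard_prod', ncard_prod', Set.ncard_univ, Nat.card_eq_fintype_card]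
  rfl
end
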